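/- arXiv:2406.05509 — 4 statements merged into one kernel-verified Lean document; each statement's English description precedes it below -/
import Mathlib

section
/- Let V1 and V2 be finite types, let F1 be a family of finsets of V1 and F2 a family of finsets of V2, and define the family F of finsets of the sum type V1 ⊕ V2 by: S ∈ F if and only if the finset {v : V1 | Sum.inl v ∈ S} belongs to F1 and the finset {w : V2 | Sum.inr w ∈ S} belongs to F2. Then the TAR graph of F is isomorphic, as a simple graph, to the box (Cartesian) product of the TAR graph of F1 and the TAR graph of F2, via the map sending S to the pair of its restrictions to V1 and V2. -/
set_option linter.unusedSectionVars false

variable {V : Type*} [Fintype V] [DecidableEq V]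

/-- A family of finsets is superset-closed if it is closed under taking supersets. -/
def SupersetClosed (F : Finset (Finset V)) : Prop :=
  ∀ ⦃S T : Finset V⦄, S ∈ F → S ⊆ T → T ∈ F

/-- A minimal member of a family: a member no proper subset of which is a member. -/
def IsMinimalMem (F : Finset (Finset V)) (M : Finset V) : Prop :=
  M ∈ F ∧ ∀ M' : Finset V, M' ⊂ M → M' ∉ F

/-- The TAR graph of a family of finsets: vertices are the members of the family,
two members being adjacent iff their symmetric difference has exactly one element. -/
def TARGraph (F : Finset (Finset V)) : SimpleGraph {S : Finset V // S ∈ F} where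
  Adj S T := (symmDiff S.1 T.1).card = 1
  symm := ⟨fun S T h => by rwa [symmDiff_comm] at h⟩
  loopless := ⟨fun S h => by simp [symmDiff_self] at h⟩

instance (F : Finset (Finset V)) : DecidableRel (TARGraph F).Adj :=
  fun S T => inferInstanceAs (Decidable ((symmDiff S.1 T.1).card = 1))

section Aux
variable {V1 V2 : Type*} [Fintype V1] [DecidableEq V1] [Fintype V2] [DecidableEq V2]

private def lpart (S : Finset (V1 ⊕ V2)) : Finset V1 :=
  Finset.univ.filter (fun v => Sum.inl v ∈ S)
private def rpart (S : Finset (V1 ⊕ V2)) : Finset V2 :=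
  Finset.univ.filter (fun w => Sum.inr w ∈ S)

private lemma mem_lpart {S : Finset (V1 ⊕ V2)} {v : V1} : v ∈ lpart S ↔ Sum.inl v ∈ S := by
  simp [lpart]

private lemma mem_rpart {S : Finset (V1 ⊕ V2)} {w : V2} : w ∈ rpart S ↔ Sum.inr w ∈ S := by
  simp [rpart]

private lemma lpart_symmDiff (S T : Finset (V1 ⊕ V2)) :
    lpart (symmDiff S T) = symmDiff (lpart S) (lpart T) := by
  ext v; simp [mem_lpart, Finset.mem_symmDiff]

private lemma rpart_symmDiff (S T : Finset (V1 ⊕ V2)) :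
    rpart (symmDiff S T) = symmDiff (rpart S) (rpart T) := by
  ext v; simp [mem_rpart, Finset.mem_symmDiff]

private lemma card_eq_parts (S : Finset (V1 ⊕ V2)) :
    S.card = (lpart S).card + (rpart S).card := by
  have h1 : S.filter (fun x => x.isLeft) = (lpart S).map ⟨Sum.inl, Sum.inl_injective⟩ := by
    ext x; cases x <;> simp [mem_lpart]
  have h2 : S.filter (fun x => ¬ x.isLeft) = (rpart S).map ⟨Sum.inr, Sum.inr_injective⟩ := by
    ext x; cases x <;> simp [mem_rpart]
  rw [← Finset.card_filter_add_card_filter_not (p := fun x => x.isLeft), h1, h2,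
    Finset.card_map, Finset.card_map]

private lemma parts_ext {S T : Finset (V1 ⊕ V2)} (h1 : lpart S = lpart T)
    (h2 : rpart S = rpart T) : S = T := by
  ext x
  cases x with
  | inl v => rw [← mem_lpart, ← mem_lpart, h1]
  | inr w => rw [← mem_rpart, ← mem_rpart, h2]

private def glue (A : Finset V1) (B : Finset V2) : Finset (V1 ⊕ V2) :=
  A.map ⟨Sum.inl, Sum.inl_injective⟩ ∪ B.map ⟨Sum.inr, Sum.inr_injective⟩

private lemma lpart_glue (A : Finset V1) (B : Finset V2) : lpart (glue A B) = A := by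
  ext v; simp [mem_lpart, glue]

private lemma rpart_glue (A : Finset V1) (B : Finset V2) : rpart (glue A B) = B := by
  ext w; simp [mem_rpart, glue]

end Aux

open SimpleGraph in
theorem stmt0 {V1 V2 : Type*} [Fintype V1] [DecidableEq V1] [Fintype V2] [DecidableEq V2]
    (F1 : Finset (Finset V1)) (F2 : Finset (Finset V2)) (F : Finset (Finset (V1 ⊕ V2)))
    (hF : ∀ S : Finset (V1 ⊕ V2), S ∈ F ↔
      (Finset.univ.filter (fun v => Sum.inl v ∈ S) ∈ F1 ∧
       Finset.univ.filter (fun w => Sum.inr w ∈ S) ∈ F2)) :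
    ∃ φ : TARGraph F ≃g (TARGraph F1 □ TARGraph F2),
      ∀ S : {S : Finset (V1 ⊕ V2) // S ∈ F},
        ((φ S).1.1 = Finset.univ.filter (fun v => Sum.inl v ∈ S.1)) ∧
        ((φ S).2.1 = Finset.univ.filter (fun w => Sum.inr w ∈ S.1)) := by
  have hF' : ∀ S : Finset (V1 ⊕ V2), S ∈ F ↔ (lpart S ∈ F1 ∧ rpart S ∈ F2) := hF
  refine ⟨⟨⟨fun S => (⟨lpart S.1, ((hF' S.1).1 S.2).1⟩, ⟨rpart S.1, ((hF' S.1).1 S.2).2⟩),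
      fun p => ⟨glue p.1.1 p.2.1, (hF' _).2 (by
        rw [lpart_glue, rpart_glue]; exact ⟨p.1.2, p.2.2⟩)⟩, ?_, ?_⟩, ?_⟩,
      fun S => ⟨rfl, rfl⟩⟩
  · intro S
    exact Subtype.ext (parts_ext (lpart_glue _ _) (rpart_glue _ _))
  · intro p
    exact Prod.ext (Subtype.ext (lpart_glue _ _)) (Subtype.ext (rpart_glue _ _))
  · intro S T
    simp only [Equiv.coe_fn_mk, boxProd_adj, TARGraph]
    have hcard : (symmDiff S.1 T.1).card
        = (symmDiff (lpart S.1) (lpart T.1)).card + (symmDiff (rpart S.1) (rpart T.1)).card := by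
      rw [← lpart_symmDiff, ← rpart_symmDiff, ← card_eq_parts]
    have hl : (⟨lpart S.1, ((hF' S.1).1 S.2).1⟩ : {A // A ∈ F1})
        = ⟨lpart T.1, ((hF' T.1).1 T.2).1⟩ ↔ (symmDiff (lpart S.1) (lpart T.1)).card = 0 := by
      rw [Subtype.ext_iff, Finset.card_eq_zero, ← Finset.bot_eq_empty, symmDiff_eq_bot]
    have hr : (⟨rpart S.1, ((hF' S.1).1 S.2).2⟩ : {B // B ∈ F2})
        = ⟨rpart T.1, ((hF' T.1).1 T.2).2⟩ ↔ (symmDiff (rpart S.1) (rpart T.1)).card = 0 := by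
      rw [Subtype.ext_iff, Finset.card_eq_zero, ← Finset.bot_eq_empty, symmDiff_eq_bot]
    rw [hl, hr, hcard]
    omega
end

section
/- Let V and V' be finite types, let F be a nonempty superset-closed family of finsets of V such that every subset of V of cardinality |V| − 1 belongs to F, and let F' be a nonempty superset-closed family of finsets of V' such that every subset of V' of cardinality |V'| − 1 belongs to F'. If the TAR graph of F and the TAR graph of F' are isomorphic as simple graphs, then |V| = |V'| and there exists a bijection ψ : V ≃ V' such that for every finset S of V, S ∈ F if and only if the image finset ψ(S) belongs to F'. (This is the abstract form of the main theorem: two base graphs with isomorphic X-TAR graphs have, after relabeling, exactly the same X-sets.) -/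
variable {V : Type*} [Fintype V] [DecidableEq V]

set_option linter.unusedSectionVars false

namespace TarAux

open SimpleGraph

variable {F : Finset (Finset V)}

lemma tar_adj {a b : {S : Finset V // S ∈ F}} :
    (TARGraph F).Adj a b ↔ (symmDiff a.1 b.1).card = 1 := Iff.rfl

lemma sd_insert_mem {x : V} {s u : Finset V} (hxs : x ∉ s) (hxu : x ∈ u) :
    symmDiff (insert x s) u = (symmDiff s u).erase x := by
  ext y
  by_cases hyx : y = x
  · subst hyx; simp [Finset.mem_symmDiff, hxs, hxu]
  · simp [Finset.mem_symmDiff, hyx]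

lemma sd_insert_not_mem {x : V} {s u : Finset V} (hxs : x ∉ s) (hxu : x ∉ u) :
    symmDiff (insert x s) u = insert x (symmDiff s u) := by
  ext y
  by_cases hyx : y = x
  · subst hyx; simp [Finset.mem_symmDiff, hxs, hxu]
  · simp [Finset.mem_symmDiff, hyx]

lemma sd_erase_mem {x : V} {s u : Finset V} (hxs : x ∈ s) (hxu : x ∈ u) :
    symmDiff (s.erase x) u = insert x (symmDiff s u) := by
  ext y
  by_cases hyx : y = x
  · subst hyx; simp [Finset.mem_symmDiff, hxs, hxu]
  · simp [Finset.mem_symmDiff, hyx]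

lemma sd_erase_not_mem {x : V} {s u : Finset V} (hxs : x ∈ s) (hxu : x ∉ u) :
    symmDiff (s.erase x) u = (symmDiff s u).erase x := by
  ext y
  by_cases hyx : y = x
  · subst hyx; simp [Finset.mem_symmDiff, hxs, hxu]
  · simp [Finset.mem_symmDiff, hyx]

lemma sd_self_insert {x : V} {s : Finset V} (hxs : x ∉ s) :
    symmDiff s (insert x s) = {x} := by
  ext y
  by_cases hyx : y = x
  · subst hyx; simp [Finset.mem_symmDiff, hxs]
  · simp [Finset.mem_symmDiff, hyx]

lemma sd_self_erase {x : V} {s : Finset V} (hxs : x ∈ s) :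
    symmDiff s (s.erase x) = {x} := by
  ext y
  by_cases hyx : y = x
  · subst hyx; simp [Finset.mem_symmDiff, hxs]
  · simp [Finset.mem_symmDiff, hyx]

lemma sd_univ (s : Finset V) : symmDiff s Finset.univ = Finset.univ \ s := by
  ext y; simp [Finset.mem_symmDiff]

lemma sd_card (s u : Finset V) :
    (symmDiff s u).card = (s \ u).card + (u \ s).card := by
  rw [symmDiff_def]
  exact Finset.card_union_of_disjoint disjoint_sdiff_sdiff

/-- Characterization of adjacency in the TAR graph. -/
lemma adj_iff {a b : {S : Finset V // S ∈ F}} :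
    (TARGraph F).Adj a b ↔
      (∃ x, x ∉ a.1 ∧ b.1 = insert x a.1) ∨ (∃ x, x ∈ a.1 ∧ b.1 = a.1.erase x) := by
  rw [tar_adj]
  constructor
  · intro h
    obtain ⟨x, hx⟩ := Finset.card_eq_one.mp h
    have hiff : ∀ y, y ∈ symmDiff a.1 b.1 ↔ y = x := by rw [hx]; simp
    have hxmem := (hiff x).mpr rfl
    rw [Finset.mem_symmDiff] at hxmem
    rcases hxmem with ⟨hxa, hxb⟩ | ⟨hxb, hxa⟩
    · right
      refine ⟨x, hxa, ?_⟩
      ext y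
      rw [Finset.mem_erase]
      have hy := hiff y
      rw [Finset.mem_symmDiff] at hy
      by_cases hyx : y = x
      · subst hyx; simp [hxa, hxb]
      · simp only [hyx, Ne, not_false_iff, true_and]
        constructor
        · intro hyb; by_contra hya; exact hyx (hy.mp (Or.inr ⟨hyb, hya⟩))
        · intro hya; by_contra hyb; exact hyx (hy.mp (Or.inl ⟨hya, hyb⟩))
    · left
      refine ⟨x, hxa, ?_⟩
      ext y
      rw [Finset.mem_insert]
      have hy := hiff y
      rw [Finset.mem_symmDiff] at hy
      by_cases hyx : y = x
      · subst hyx; simp [hxb]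
      · simp only [hyx, false_or]
        constructor
        · intro hyb; by_contra hya; exact hyx (hy.mp (Or.inr ⟨hyb, hya⟩))
        · intro hya; by_contra hyb; exact hyx (hy.mp (Or.inl ⟨hya, hyb⟩))
  · rintro (⟨x, hx, hb⟩ | ⟨x, hx, hb⟩)
    · rw [hb, sd_self_insert hx]; simp
    · rw [hb, sd_self_erase hx]; simp

lemma exists_walk (hsup : SupersetClosed F) :
    ∀ (k : ℕ) (a b : {S : Finset V // S ∈ F}), (symmDiff a.1 b.1).card = k →
      ∃ p : (TARGraph F).Walk a b, p.length = k := by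
  intro k
  induction k with
  | zero =>
    intro a b h
    have : a.1 = b.1 := by
      have h0 := Finset.card_eq_zero.mp h
      rw [← Finset.bot_eq_empty] at h0
      rwa [symmDiff_eq_bot] at h0
    have hab : a = b := Subtype.ext this
    subst hab
    exact ⟨SimpleGraph.Walk.nil, rfl⟩
  | succ n ih =>
    intro a b h
    by_cases hb : (b.1 \ a.1).Nonempty
    · obtain ⟨x, hx⟩ := hb
      rw [Finset.mem_sdiff] at hx
      obtain ⟨hxb, hxa⟩ := hx
      have hcF : insert x a.1 ∈ F := hsup a.2 (Finset.subset_insert x a.1)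
      set c : {S : Finset V // S ∈ F} := ⟨insert x a.1, hcF⟩ with hc
      have hadj : (TARGraph F).Adj a c := by
        rw [tar_adj, hc, sd_self_insert hxa]; simp
      have hcb : (symmDiff c.1 b.1).card = n := by
        rw [hc]
        simp only []
        rw [sd_insert_mem hxa hxb]
        rw [Finset.card_erase_of_mem (by rw [Finset.mem_symmDiff]; exact Or.inr ⟨hxb, hxa⟩)]
        omega
      obtain ⟨p, hp⟩ := ih c b hcb
      exact ⟨SimpleGraph.Walk.cons hadj p, by simp [hp]⟩
    · have hsub : b.1 ⊆ a.1 := by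
        rw [Finset.not_nonempty_iff_eq_empty, Finset.sdiff_eq_empty_iff_subset] at hb
        exact hb
      have hne : (a.1 \ b.1).Nonempty := by
        rw [← Finset.card_pos]
        have : symmDiff a.1 b.1 = a.1 \ b.1 := by
          rw [symmDiff_def]
          have : b.1 \ a.1 = ∅ := Finset.sdiff_eq_empty_iff_subset.mpr hsub
          rw [Finset.sup_eq_union, this, Finset.union_empty]
        rw [← this, h]; omega
      obtain ⟨x, hx⟩ := hne
      rw [Finset.mem_sdiff] at hx
      obtain ⟨hxa, hxb⟩ := hx
      have hcF : a.1.erase x ∈ F := by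
        apply hsup b.2
        intro y hy
        rw [Finset.mem_erase]
        exact ⟨fun hyx => hxb (hyx ▸ hy), hsub hy⟩
      set c : {S : Finset V // S ∈ F} := ⟨a.1.erase x, hcF⟩ with hc
      have hadj : (TARGraph F).Adj a c := by
        rw [tar_adj, hc, sd_self_erase hxa]; simp
      have hcb : (symmDiff c.1 b.1).card = n := by
        rw [hc]
        simp only []
        rw [sd_erase_not_mem hxa hxb]
        rw [Finset.card_erase_of_mem (by rw [Finset.mem_symmDiff]; exact Or.inl ⟨hxa, hxb⟩)]
        omega
      obtain ⟨p, hp⟩ := ih c b hcb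
      exact ⟨SimpleGraph.Walk.cons hadj p, by simp [hp]⟩

lemma tar_reachable (hsup : SupersetClosed F) (a b : {S : Finset V // S ∈ F}) :
    (TARGraph F).Reachable a b := by
  obtain ⟨p, _⟩ := exists_walk hsup _ a b rfl
  exact ⟨p⟩

lemma walk_lower {a b : {S : Finset V // S ∈ F}} (q : (TARGraph F).Walk a b) :
    (symmDiff a.1 b.1).card ≤ q.length := by
  induction q with
  | nil => simp [symmDiff_self]
  | @cons u c w huc q ih =>
    have htri : symmDiff u.1 w.1 ⊆ symmDiff u.1 c.1 ∪ symmDiff c.1 w.1 :=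
      symmDiff_triangle u.1 c.1 w.1
    calc (symmDiff u.1 w.1).card ≤ (symmDiff u.1 c.1 ∪ symmDiff c.1 w.1).card :=
          Finset.card_le_card htri
      _ ≤ (symmDiff u.1 c.1).card + (symmDiff c.1 w.1).card := Finset.card_union_le _ _
      _ ≤ 1 + q.length := by
          have : (symmDiff u.1 c.1).card = 1 := huc
          omega
      _ = (SimpleGraph.Walk.cons huc q).length := by simp [Nat.add_comm]

/-- The distance in the TAR graph of a superset-closed family equals the cardinality
of the symmetric difference. -/
lemma dist_eq (hsup : SupersetClosed F) (a b : {S : Finset V // S ∈ F}) :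
    (TARGraph F).dist a b = (symmDiff a.1 b.1).card := by
  obtain ⟨p, hp⟩ := exists_walk hsup _ a b rfl
  have h1 : (TARGraph F).dist a b ≤ (symmDiff a.1 b.1).card := hp ▸ SimpleGraph.dist_le p
  obtain ⟨q, hq⟩ := (tar_reachable hsup a b).exists_walk_length_eq_dist
  have h2 := walk_lower q
  omega


lemma iso_dist_le {W W' : Type*} {G : SimpleGraph W} {G' : SimpleGraph W'} (φ : G ≃g G')
    {a b : W} (hr : G.Reachable a b) : G'.dist (φ a) (φ b) ≤ G.dist a b := by
  obtain ⟨p, hp⟩ := hr.exists_walk_length_eq_dist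
  calc G'.dist (φ a) (φ b) ≤ (p.map φ.toHom).length := SimpleGraph.dist_le _
    _ = p.length := SimpleGraph.Walk.length_map _ _
    _ = G.dist a b := hp

lemma iso_dist {W W' : Type*} {G : SimpleGraph W} {G' : SimpleGraph W'} (φ : G ≃g G')
    {a b : W} (hr : G.Reachable a b) : G'.dist (φ a) (φ b) = G.dist a b := by
  refine le_antisymm (iso_dist_le φ hr) ?_
  have h2 := iso_dist_le φ.symm (hr.map φ.toHom)
  simpa using h2

lemma down_count (hsup : SupersetClosed F) (s u : {S : Finset V // S ∈ F}) :
    (((TARGraph F).neighborFinset s).filter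
        (fun t => (TARGraph F).dist t u < (TARGraph F).dist s u)).card
      = (u.1 \ s.1).card + ((s.1 \ u.1).filter (fun x => s.1.erase x ∈ F)).card := by
  classical
  set N := ((TARGraph F).neighborFinset s).filter
      (fun t => (TARGraph F).dist t u < (TARGraph F).dist s u) with hN
  have hsplit := Finset.card_filter_add_card_filter_not
      (s := N) (p := fun t => s.1 ⊆ t.1)
  have hmemN : ∀ t, t ∈ N ↔ (TARGraph F).Adj s t ∧
      (symmDiff t.1 u.1).card < (symmDiff s.1 u.1).card := by
    intro t
    rw [hN, Finset.mem_filter, SimpleGraph.mem_neighborFinset,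
        dist_eq hsup t u, dist_eq hsup s u]
  have h1 : (N.filter (fun t => s.1 ⊆ t.1)).card = (u.1 \ s.1).card := by
    symm
    apply Finset.card_bij (i := fun x _ =>
      (⟨insert x s.1, hsup s.2 (Finset.subset_insert x s.1)⟩ : {S : Finset V // S ∈ F}))
    · intro x hx
      rw [Finset.mem_sdiff] at hx
      obtain ⟨hxu, hxs⟩ := hx
      rw [Finset.mem_filter, hmemN]
      refine ⟨⟨?_, ?_⟩, Finset.subset_insert x s.1⟩
      · rw [tar_adj]
        show (symmDiff s.1 (insert x s.1)).card = 1
        rw [sd_self_insert hxs]; simp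
      · show (symmDiff (insert x s.1) u.1).card < _
        rw [sd_insert_mem hxs hxu]
        have hxm : x ∈ symmDiff s.1 u.1 := by
          rw [Finset.mem_symmDiff]; exact Or.inr ⟨hxu, hxs⟩
        rw [Finset.card_erase_of_mem hxm]
        have : 0 < (symmDiff s.1 u.1).card := Finset.card_pos.mpr ⟨x, hxm⟩
        omega
    · intro x hx y hy hxy
      have heq : insert x s.1 = insert y s.1 := congrArg Subtype.val hxy
      rw [Finset.mem_sdiff] at hx hy
      have hxmem : x ∈ insert y s.1 := heq ▸ Finset.mem_insert_self x s.1
      rcases Finset.mem_insert.mp hxmem with h | h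
      · exact h
      · exact absurd h hx.2
    · intro t ht
      rw [Finset.mem_filter, hmemN] at ht
      obtain ⟨⟨hadj, hdist⟩, hsub⟩ := ht
      rcases adj_iff.mp hadj with ⟨x, hxs, hb⟩ | ⟨x, hxs, hb⟩
      · have hxu : x ∈ u.1 := by
          by_contra hxu
          rw [hb, sd_insert_not_mem hxs hxu] at hdist
          rw [Finset.card_insert_of_notMem
            (by rw [Finset.mem_symmDiff]; tauto)] at hdist
          omega
        exact ⟨x, Finset.mem_sdiff.mpr ⟨hxu, hxs⟩, Subtype.ext hb.symm⟩
      · exfalso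
        rw [hb] at hsub
        exact Finset.notMem_erase x s.1 (hsub hxs)
  have h2 : (N.filter (fun t => ¬ s.1 ⊆ t.1)).card
      = ((s.1 \ u.1).filter (fun x => s.1.erase x ∈ F)).card := by
    symm
    apply Finset.card_bij (i := fun x hx =>
      (⟨s.1.erase x, (Finset.mem_filter.mp hx).2⟩ : {S : Finset V // S ∈ F}))
    · intro x hx
      have hx' := hx
      rw [Finset.mem_filter, Finset.mem_sdiff] at hx'
      obtain ⟨⟨hxs, hxu⟩, _⟩ := hx'
      rw [Finset.mem_filter, hmemN]
      refine ⟨⟨?_, ?_⟩, ?_⟩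
      · rw [tar_adj]
        show (symmDiff s.1 (s.1.erase x)).card = 1
        rw [sd_self_erase hxs]; simp
      · show (symmDiff (s.1.erase x) u.1).card < _
        rw [sd_erase_not_mem hxs hxu]
        have hxm : x ∈ symmDiff s.1 u.1 := by
          rw [Finset.mem_symmDiff]; exact Or.inl ⟨hxs, hxu⟩
        rw [Finset.card_erase_of_mem hxm]
        have : 0 < (symmDiff s.1 u.1).card := Finset.card_pos.mpr ⟨x, hxm⟩
        omega
      · intro hsub
        exact Finset.notMem_erase x s.1 (hsub hxs)
    · intro x hx y hy hxy
      have heq : s.1.erase x = s.1.erase y := congrArg Subtype.val hxy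
      rw [Finset.mem_filter, Finset.mem_sdiff] at hx hy
      by_contra hne
      have hmem : x ∈ s.1.erase y := Finset.mem_erase.mpr ⟨hne, hx.1.1⟩
      rw [← heq] at hmem
      exact Finset.notMem_erase x s.1 hmem
    · intro t ht
      rw [Finset.mem_filter, hmemN] at ht
      obtain ⟨⟨hadj, hdist⟩, hsub⟩ := ht
      rcases adj_iff.mp hadj with ⟨x, hxs, hb⟩ | ⟨x, hxs, hb⟩
      · exfalso; rw [hb] at hsub; exact hsub (Finset.subset_insert x s.1)
      · have hxu : x ∉ u.1 := by
          intro hxu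
          rw [hb, sd_erase_mem hxs hxu] at hdist
          rw [Finset.card_insert_of_notMem
            (by rw [Finset.mem_symmDiff]; tauto)] at hdist
          omega
        have hxmemf : x ∈ (s.1 \ u.1).filter (fun x => s.1.erase x ∈ F) := by
          rw [Finset.mem_filter, Finset.mem_sdiff]
          exact ⟨⟨hxs, hxu⟩, hb ▸ t.2⟩
        exact ⟨x, hxmemf, Subtype.ext hb.symm⟩
  omega

/-- In the TAR graph of a superset-closed family, the full set is an "apex":
the number of neighbors closer to it is exactly the distance to it. -/
lemma univ_apex (hsup : SupersetClosed F) (vU : {S : Finset V // S ∈ F})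
    (hU : vU.1 = Finset.univ) (s : {S : Finset V // S ∈ F}) :
    (((TARGraph F).neighborFinset s).filter
        (fun t => (TARGraph F).dist t vU < (TARGraph F).dist s vU)).card
      = (TARGraph F).dist s vU := by
  rw [down_count hsup s vU, dist_eq hsup, hU, sd_univ]
  have h0 : s.1 \ Finset.univ = ∅ :=
    Finset.sdiff_eq_empty_iff_subset.mpr (Finset.subset_univ _)
  rw [h0, Finset.filter_empty, Finset.card_empty]
  omega

lemma erase_mem_of_apex (hsup : SupersetClosed F) (U : {S : Finset V // S ∈ F})
    (happly : ∀ s : {S : Finset V // S ∈ F},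
      (((TARGraph F).neighborFinset s).filter
        (fun t => (TARGraph F).dist t U < (TARGraph F).dist s U)).card
        = (TARGraph F).dist s U)
    (s : {S : Finset V // S ∈ F}) (x : V) (hxs : x ∈ s.1) (hxU : x ∉ U.1) :
    s.1.erase x ∈ F := by
  classical
  have hdc := down_count hsup s U
  have hd : (TARGraph F).dist s U = (s.1 \ U.1).card + (U.1 \ s.1).card := by
    rw [dist_eq hsup, sd_card]
  have hr : ((s.1 \ U.1).filter (fun x => s.1.erase x ∈ F)).card = (s.1 \ U.1).card := by
    rw [happly s, hd] at hdc
    have hle : ((s.1 \ U.1).filter (fun x => s.1.erase x ∈ F)).card ≤ (s.1 \ U.1).card :=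
      Finset.card_le_card (Finset.filter_subset _ _)
    omega
  have heq : (s.1 \ U.1).filter (fun x => s.1.erase x ∈ F) = s.1 \ U.1 :=
    Finset.eq_of_subset_of_card_le (Finset.filter_subset _ _) (by omega)
  have hx : x ∈ (s.1 \ U.1).filter (fun x => s.1.erase x ∈ F) := by
    rw [heq, Finset.mem_sdiff]; exact ⟨hxs, hxU⟩
  exact (Finset.mem_filter.mp hx).2

lemma inter_mem (hsup : SupersetClosed F) (U : Finset V)
    (hP : ∀ (s : {S : Finset V // S ∈ F}) (x : V), x ∈ s.1 → x ∉ U → s.1.erase x ∈ F) :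
    ∀ (k : ℕ) (S : Finset V), S ∈ F → (S \ U).card = k → S ∩ U ∈ F := by
  intro k
  induction k with
  | zero =>
    intro S hS h0
    have hsub : S ⊆ U := by
      rwa [← Finset.sdiff_eq_empty_iff_subset, ← Finset.card_eq_zero]
    rwa [Finset.inter_eq_left.mpr hsub]
  | succ n ih =>
    intro S hS h
    have hne : (S \ U).Nonempty := by rw [← Finset.card_pos]; omega
    obtain ⟨x, hx⟩ := hne
    rw [Finset.mem_sdiff] at hx
    have hSx : S.erase x ∈ F := hP ⟨S, hS⟩ x hx.1 hx.2
    have h1 : S.erase x \ U = (S \ U).erase x := by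
      ext y; simp only [Finset.mem_erase, Finset.mem_sdiff]; tauto
    have hcard : (S.erase x \ U).card = n := by
      rw [h1, Finset.card_erase_of_mem (Finset.mem_sdiff.mpr hx)]; omega
    have h2 : S.erase x ∩ U = S ∩ U := by
      ext y; simp only [Finset.mem_inter, Finset.mem_erase]
      constructor
      · rintro ⟨⟨_, hyS⟩, hyU⟩; exact ⟨hyS, hyU⟩
      · rintro ⟨hyS, hyU⟩; exact ⟨⟨fun hyx => hx.2 (hyx ▸ hyU), hyS⟩, hyU⟩
    have hres := ih (S.erase x) hSx hcard
    rwa [h2] at hres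

lemma nbr_univ {t vU : {S : Finset V // S ∈ F}} (hU : vU.1 = Finset.univ)
    (h : (TARGraph F).Adj vU t) : ∃ y, t.1 = Finset.univ.erase y := by
  have h1 : (symmDiff vU.1 t.1).card = 1 := h
  rw [hU, symmDiff_comm, sd_univ] at h1
  obtain ⟨y, hy⟩ := Finset.card_eq_one.mp h1
  refine ⟨y, ?_⟩
  ext z
  have hz : z ∈ Finset.univ \ t.1 ↔ z = y := by rw [hy]; simp
  simp only [Finset.mem_sdiff, Finset.mem_univ, true_and] at hz
  rw [Finset.mem_erase]
  constructor
  · intro hzt; exact ⟨fun hzy => (hz.mpr hzy) hzt, Finset.mem_univ z⟩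
  · rintro ⟨hzy, -⟩; by_contra hzt; exact hzy (hz.mp hzt)

lemma erase_univ_inj {x y : V}
    (h : (Finset.univ : Finset V).erase x = Finset.univ.erase y) : x = y := by
  by_contra hne
  have hmem : x ∈ Finset.univ.erase y := Finset.mem_erase.mpr ⟨hne, Finset.mem_univ x⟩
  rw [← h] at hmem
  exact Finset.notMem_erase x _ hmem

lemma mem_crit (hsup : SupersetClosed F) (s vU dx : {S : Finset V // S ∈ F}) (x : V)
    (hU : vU.1 = Finset.univ) (hdx : dx.1 = Finset.univ.erase x) :
    x ∈ s.1 ↔ (TARGraph F).dist s dx = (TARGraph F).dist s vU + 1 := by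
  rw [dist_eq hsup s dx, dist_eq hsup s vU, hU, hdx, sd_univ]
  by_cases hxs : x ∈ s.1
  · have hsd : symmDiff s.1 (Finset.univ.erase x) = insert x (Finset.univ \ s.1) := by
      ext y
      by_cases hyx : y = x
      · subst hyx; simp [Finset.mem_symmDiff, hxs]
      · simp [Finset.mem_symmDiff, hyx]
    rw [hsd, Finset.card_insert_of_notMem (by simp [hxs])]
    simp [hxs]
  · have hsd : symmDiff s.1 (Finset.univ.erase x) = (Finset.univ \ s.1).erase x := by
      ext y
      by_cases hyx : y = x
      · subst hyx; simp [Finset.mem_symmDiff, hxs]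
      · simp [Finset.mem_symmDiff, hyx]
    rw [hsd, Finset.card_erase_of_mem (by simp [hxs])]
    have hpos : 0 < (Finset.univ \ s.1).card := Finset.card_pos.mpr ⟨x, by simp [hxs]⟩
    simp only [hxs, false_iff]
    omega

end TarAux

open TarAux in
theorem stmt9 {V' : Type*} [Fintype V'] [DecidableEq V']
    (F : Finset (Finset V)) (hne : F.Nonempty) (hsup : SupersetClosed F)
    (hn1 : ∀ S : Finset V, S.card = Fintype.card V - 1 → S ∈ F)
    (F' : Finset (Finset V')) (hne' : F'.Nonempty) (hsup' : SupersetClosed F')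
    (hn1' : ∀ S : Finset V', S.card = Fintype.card V' - 1 → S ∈ F')
    (hiso : Nonempty (TARGraph F ≃g TARGraph F')) :
    Fintype.card V = Fintype.card V' ∧
    ∃ ψ : V ≃ V', ∀ S : Finset V, S ∈ F ↔ S.image ψ ∈ F' := by
  classical
  obtain ⟨φ⟩ := hiso
  have hUF : (Finset.univ : Finset V) ∈ F := by
    obtain ⟨S, hS⟩ := hne; exact hsup hS (Finset.subset_univ S)
  have hUF' : (Finset.univ : Finset V') ∈ F' := by
    obtain ⟨S, hS⟩ := hne'; exact hsup' hS (Finset.subset_univ S)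
  set vU : {S : Finset V // S ∈ F} := ⟨Finset.univ, hUF⟩ with hvU
  set vU' : {S : Finset V' // S ∈ F'} := ⟨Finset.univ, hUF'⟩ with hvU'
  set U' := φ vU with hU'def
  have hUsymm : φ.symm U' = vU := φ.symm_apply_apply vU
  have hdistF' : ∀ a b : {S : Finset V' // S ∈ F'},
      (TARGraph F).dist (φ.symm a) (φ.symm b) = (TARGraph F').dist a b :=
    fun a b => iso_dist φ.symm (tar_reachable hsup' a b)
  -- U' is an apex of the TAR graph of F'
  have happly : ∀ s' : {S : Finset V' // S ∈ F'},
      (((TARGraph F').neighborFinset s').filter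
        (fun t => (TARGraph F').dist t U' < (TARGraph F').dist s' U')).card
        = (TARGraph F').dist s' U' := by
    intro s'
    set s := φ.symm s' with hs
    have hs' : φ s = s' := φ.apply_symm_apply s'
    have hbij : (((TARGraph F').neighborFinset s').filter
        (fun t => (TARGraph F').dist t U' < (TARGraph F').dist s' U')).card
        = (((TARGraph F).neighborFinset s).filter
        (fun t => (TARGraph F).dist t vU < (TARGraph F).dist s vU)).card := by
      apply Finset.card_bij (i := fun t _ => φ.symm t)
      · intro t ht
        rw [Finset.mem_filter, SimpleGraph.mem_neighborFinset] at ht ⊢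
        obtain ⟨hadj, hlt⟩ := ht
        constructor
        · rw [hs]; exact φ.symm.map_rel_iff.mpr hadj
        · rw [hs, ← hUsymm, hdistF', hdistF']; exact hlt
      · intro a _ b _ hab; exact φ.symm.injective hab
      · intro t ht
        rw [Finset.mem_filter, SimpleGraph.mem_neighborFinset] at ht
        obtain ⟨hadj, hlt⟩ := ht
        refine ⟨φ t, ?_, (φ.symm_apply_apply t)⟩
        rw [Finset.mem_filter, SimpleGraph.mem_neighborFinset]
        constructor
        · rw [← hs']; exact φ.map_rel_iff.mpr hadj
        · have e1 := hdistF' (φ t) U'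
          rw [φ.symm_apply_apply, hUsymm] at e1
          have e2 := hdistF' s' U'
          rw [← hs, hUsymm] at e2
          rw [← e1, ← e2]
          exact hlt
    have e2 := hdistF' s' U'
    rw [← hs, hUsymm] at e2
    rw [hbij, ← e2]
    exact univ_apex hsup vU rfl s
  have hP : ∀ (s : {S : Finset V' // S ∈ F'}) (x : V'),
      x ∈ s.1 → x ∉ U'.1 → s.1.erase x ∈ F' :=
    fun s x hxs hxU => erase_mem_of_apex hsup' U' happly s x hxs hxU
  have hmemiff : ∀ S : Finset V', S ∈ F' ↔ S ∩ U'.1 ∈ F' := by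
    intro S
    constructor
    · intro hS; exact inter_mem hsup' U'.1 hP _ S hS rfl
    · intro hS; exact hsup' hS Finset.inter_subset_left
  set K : Finset V' := Finset.univ \ U'.1 with hK
  have hsdK : ∀ S : Finset V', symmDiff S K ∩ U'.1 = S ∩ U'.1 := by
    intro S; ext y
    by_cases hyU : y ∈ U'.1
    · simp [Finset.mem_symmDiff, hK, hyU]
    · simp [Finset.mem_symmDiff, hK, hyU]
  have hKmem : ∀ S : Finset V', S ∈ F' ↔ symmDiff S K ∈ F' := by
    intro S; rw [hmemiff S, hmemiff (symmDiff S K), hsdK]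
  have hcancel : ∀ S : Finset V', symmDiff (symmDiff S K) K = S :=
    fun S => symmDiff_symmDiff_cancel_right K S
  have hsd2 : ∀ a b : Finset V', symmDiff (symmDiff a K) (symmDiff b K) = symmDiff a b := by
    intro a b
    rw [symmDiff_symmDiff_symmDiff_comm, symmDiff_self, symmDiff_bot]
  let θ : TARGraph F' ≃g TARGraph F' :=
    { toFun := fun S => ⟨symmDiff S.1 K, (hKmem S.1).mp S.2⟩,
      invFun := fun S => ⟨symmDiff S.1 K, (hKmem S.1).mp S.2⟩,
      left_inv := fun S => Subtype.ext (hcancel S.1),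
      right_inv := fun S => Subtype.ext (hcancel S.1),
      map_rel_iff' := by
        intro a b
        show (TARGraph F').Adj ⟨symmDiff a.1 K, _⟩ ⟨symmDiff b.1 K, _⟩ ↔ (TARGraph F').Adj a b
        rw [tar_adj, tar_adj]
        show (symmDiff (symmDiff a.1 K) (symmDiff b.1 K)).card = 1 ↔ _
        rw [hsd2] }
  set φ₂ : TARGraph F ≃g TARGraph F' := φ.trans θ with hφ₂
  have hφ2app : ∀ a, φ₂ a = θ (φ a) := fun a => rfl
  have husd : symmDiff U'.1 K = Finset.univ := by
    ext y
    by_cases hyU : y ∈ U'.1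
    · simp [Finset.mem_symmDiff, hK, hyU]
    · simp [Finset.mem_symmDiff, hK, hyU]
  have hφ2U : φ₂ vU = vU' := by
    apply Subtype.ext
    show symmDiff (φ vU).1 K = Finset.univ
    exact husd
  -- the D vertices
  have hDF : ∀ x : V, (Finset.univ.erase x : Finset V) ∈ F := by
    intro x
    exact hn1 _ (by rw [Finset.card_erase_of_mem (Finset.mem_univ x), Finset.card_univ])
  have hDF' : ∀ y : V', (Finset.univ.erase y : Finset V') ∈ F' := by
    intro y
    exact hn1' _ (by rw [Finset.card_erase_of_mem (Finset.mem_univ y), Finset.card_univ])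
  set D : V → {S : Finset V // S ∈ F} := fun x => ⟨Finset.univ.erase x, hDF x⟩ with hD
  set D' : V' → {S : Finset V' // S ∈ F'} := fun y => ⟨Finset.univ.erase y, hDF' y⟩ with hD'
  have hDadj : ∀ x : V, (TARGraph F).Adj vU (D x) := by
    intro x
    show (symmDiff (Finset.univ : Finset V) (Finset.univ.erase x)).card = 1
    rw [sd_self_erase (Finset.mem_univ x)]; simp
  have hD'adj : ∀ y : V', (TARGraph F').Adj vU' (D' y) := by
    intro y
    show (symmDiff (Finset.univ : Finset V') (Finset.univ.erase y)).card = 1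
    rw [sd_self_erase (Finset.mem_univ y)]; simp
  have hex : ∀ x : V, ∃ y, (φ₂ (D x)).1 = Finset.univ.erase y := by
    intro x
    apply nbr_univ (vU := vU') rfl
    have h := φ₂.map_rel_iff.mpr (hDadj x)
    rwa [hφ2U] at h
  choose ψ0 hψ0 using hex
  have hexχ : ∀ y : V', ∃ x, (φ₂.symm (D' y)).1 = Finset.univ.erase x := by
    intro y
    apply nbr_univ (vU := vU) rfl
    have h := φ₂.symm.map_rel_iff.mpr (hD'adj y)
    rwa [show φ₂.symm vU' = vU from by rw [← hφ2U]; exact φ₂.symm_apply_apply vU] at h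
  choose χ0 hχ0 using hexχ
  have hDψ : ∀ x : V, D' (ψ0 x) = φ₂ (D x) := by
    intro x
    apply Subtype.ext
    show Finset.univ.erase (ψ0 x) = (φ₂ (D x)).1
    rw [hψ0 x]
  have hDχ : ∀ y : V', D (χ0 y) = φ₂.symm (D' y) := by
    intro y
    apply Subtype.ext
    show Finset.univ.erase (χ0 y) = (φ₂.symm (D' y)).1
    rw [hχ0 y]
  have hleft : ∀ x : V, χ0 (ψ0 x) = x := by
    intro x
    have h1 : φ₂.symm (D' (ψ0 x)) = D x := by rw [hDψ x]; exact φ₂.symm_apply_apply _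
    have h2 := hχ0 (ψ0 x)
    rw [h1] at h2
    have h3 : Finset.univ.erase x = Finset.univ.erase (χ0 (ψ0 x)) := h2
    exact (erase_univ_inj h3).symm
  have hright : ∀ y : V', ψ0 (χ0 y) = y := by
    intro y
    have h1 : φ₂ (D (χ0 y)) = D' y := by rw [hDχ y]; exact φ₂.apply_symm_apply _
    have h2 := hψ0 (χ0 y)
    rw [h1] at h2
    have h3 : Finset.univ.erase y = Finset.univ.erase (ψ0 (χ0 y)) := h2
    exact (erase_univ_inj h3).symm
  set ψeq : V ≃ V' := ⟨ψ0, χ0, hleft, hright⟩ with hψeqdef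
  have hcrit : ∀ (t : {S : Finset V // S ∈ F}) (x : V), x ∈ t.1 ↔ ψ0 x ∈ (φ₂ t).1 := by
    intro t x
    rw [mem_crit hsup t vU (D x) x rfl rfl,
        mem_crit hsup' (φ₂ t) vU' (D' (ψ0 x)) (ψ0 x) rfl rfl]
    have e1 : (TARGraph F').dist (φ₂ t) (D' (ψ0 x)) = (TARGraph F).dist t (D x) := by
      rw [hDψ x]; exact iso_dist φ₂ (tar_reachable hsup t (D x))
    have e2 : (TARGraph F').dist (φ₂ t) vU' = (TARGraph F).dist t vU := by
      rw [← hφ2U]; exact iso_dist φ₂ (tar_reachable hsup t vU)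
    rw [e1, e2]
  have hcoe : ⇑ψeq = ψ0 := by rw [hψeqdef]; exact Equiv.coe_fn_mk ψ0 χ0 hleft hright
  refine ⟨Fintype.card_congr ψeq, ψeq, ?_⟩
  intro S
  rw [hcoe]
  constructor
  · intro hS
    have himg : (φ₂ ⟨S, hS⟩).1 = S.image ψ0 := by
      ext y
      rw [Finset.mem_image]
      constructor
      · intro hy
        refine ⟨χ0 y, ?_, hright y⟩
        have hmem : ψ0 (χ0 y) ∈ (φ₂ ⟨S, hS⟩).1 := by rwa [hright y]
        exact (hcrit ⟨S, hS⟩ (χ0 y)).mpr hmem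
      · rintro ⟨x, hxS, rfl⟩
        exact (hcrit ⟨S, hS⟩ x).mp hxS
    rw [← himg]
    exact (φ₂ ⟨S, hS⟩).2
  · intro hS'
    have hmem : ∀ x : V, x ∈ (φ₂.symm ⟨S.image ψ0, hS'⟩).1 ↔ x ∈ S := by
      intro x
      have h := hcrit (φ₂.symm ⟨S.image ψ0, hS'⟩) x
      rw [φ₂.apply_symm_apply] at h
      rw [h]
      show ψ0 x ∈ S.image ψ0 ↔ x ∈ S
      rw [Finset.mem_image]
      constructor
      · rintro ⟨z, hz, hzx⟩
        have hzz : z = x := by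
          have hc := congrArg χ0 hzx
          rwa [hleft, hleft] at hc
        exact hzz ▸ hz
      · intro hx; exact ⟨x, hx, rfl⟩
    have hTS : (φ₂.symm ⟨S.image ψ0, hS'⟩).1 = S := Finset.ext hmem
    rw [← hTS]
    exact (φ₂.symm ⟨S.image ψ0, hS'⟩).2
end

section
/- Let V be a finite type with n = |V| and let F be a nonempty superset-closed family of finsets of V such that every subset of V of cardinality n − 1 belongs to F. A map φ from F to F is a graph automorphism of the TAR graph of F if and only if there exist a finset R of V that is disjoint from every minimal member of F and a bijection ψ : V ≃ V that maps every minimal member of F to a minimal member of F of the same cardinality, such that φ(S) = ψ(S) △ R for every S ∈ F (where ψ(S) is the image finset and △ is symmetric difference). -/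
variable {V : Type*} [Fintype V] [DecidableEq V]

/-! ### Auxiliary lemmas -/

lemma symmDiff_singleton_of_mem {A : Finset V} {v : V} (h : v ∈ A) :
    symmDiff A {v} = A.erase v := by
  ext x; simp only [Finset.mem_symmDiff, Finset.mem_singleton, Finset.mem_erase]
  constructor
  · rintro (⟨h1, h2⟩ | ⟨rfl, h2⟩)
    · exact ⟨h2, h1⟩
    · exact absurd h h2
  · rintro ⟨h1, h2⟩; exact Or.inl ⟨h2, h1⟩

lemma symmDiff_singleton_of_not_mem {A : Finset V} {v : V} (h : v ∉ A) :
    symmDiff A {v} = insert v A := by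
  ext x; simp only [Finset.mem_symmDiff, Finset.mem_singleton, Finset.mem_insert]
  constructor
  · rintro (⟨h1, h2⟩ | ⟨rfl, h2⟩)
    · exact Or.inr h1
    · exact Or.inl rfl
  · rintro (rfl | h1)
    · exact Or.inr ⟨rfl, h⟩
    · exact Or.inl ⟨h1, fun hh => h (hh ▸ h1)⟩

lemma tar_exists_minimal_subset {F : Finset (Finset V)} {S : Finset V} (hS : S ∈ F) :
    ∃ M, IsMinimalMem F M ∧ M ⊆ S := by
  have hne : (F.filter (· ⊆ S)).Nonempty := ⟨S, by simp [hS]⟩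
  obtain ⟨m, hm, hmin⟩ := Finset.exists_minimal hne
  simp only [Finset.mem_filter] at hm
  refine ⟨m, ⟨hm.1, fun M' hsub hM' => ?_⟩, hm.2⟩
  exact hsub.2 (hmin (Finset.mem_filter.mpr ⟨hM', hsub.subset.trans hm.2⟩) hsub.subset)

lemma tar_exists_walk {F : Finset (Finset V)} (hsup : SupersetClosed F) :
    ∀ (k : ℕ) (S T : {S : Finset V // S ∈ F}), (symmDiff S.1 T.1).card ≤ k →
      ∃ p : (TARGraph F).Walk S T, p.length ≤ k := by
  intro k
  induction k with
  | zero =>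
    intro S T h
    have hST : S = T := by
      apply Subtype.ext
      exact symmDiff_eq_bot.mp (Finset.card_eq_zero.mp (Nat.le_zero.mp h))
    subst hST
    exact ⟨SimpleGraph.Walk.nil, by simp⟩
  | succ k ih =>
    intro S T h
    by_cases heq : S = T
    · subst heq; exact ⟨SimpleGraph.Walk.nil, by simp⟩
    have hne : (symmDiff S.1 T.1).Nonempty := by
      rw [Finset.nonempty_iff_ne_empty]
      intro hc
      exact heq (Subtype.ext (symmDiff_eq_bot.mp hc))
    obtain ⟨v, hvmem, hS'⟩ : ∃ v, v ∈ symmDiff S.1 T.1 ∧ symmDiff S.1 {v} ∈ F := by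
      by_cases hTS : (T.1 \ S.1).Nonempty
      · obtain ⟨v, hv⟩ := hTS
        rw [Finset.mem_sdiff] at hv
        refine ⟨v, Finset.mem_symmDiff.mpr (Or.inr ⟨hv.1, hv.2⟩), ?_⟩
        rw [symmDiff_singleton_of_not_mem hv.2]
        exact hsup S.2 (Finset.subset_insert _ _)
      · have hsub : T.1 ⊆ S.1 := by
          rwa [Finset.not_nonempty_iff_eq_empty, Finset.sdiff_eq_empty_iff_subset] at hTS
        obtain ⟨v, hv⟩ := hne
        have hvS : v ∈ S.1 ∧ v ∉ T.1 := by
          rcases Finset.mem_symmDiff.mp hv with ⟨h1, h2⟩ | ⟨h1, h2⟩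
          · exact ⟨h1, h2⟩
          · exact absurd (hsub h1) h2
        refine ⟨v, hv, ?_⟩
        rw [symmDiff_singleton_of_mem hvS.1]
        exact hsup T.2 (Finset.subset_erase.mpr ⟨hsub, hvS.2⟩)
    set S' : {S : Finset V // S ∈ F} := ⟨symmDiff S.1 {v}, hS'⟩ with hS'def
    have hadj : (TARGraph F).Adj S S' := by
      show (symmDiff S.1 (symmDiff S.1 {v})).card = 1
      rw [symmDiff_symmDiff_cancel_left]
      simp
    have hcard : (symmDiff S'.1 T.1).card ≤ k := by
      have heq2 : symmDiff S'.1 T.1 = (symmDiff S.1 T.1).erase v := by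
        show symmDiff (symmDiff S.1 {v}) T.1 = _
        ext x
        by_cases hx : x = v
        · subst hx
          simp only [Finset.mem_symmDiff, Finset.mem_singleton, Finset.mem_erase]
          have hv' := Finset.mem_symmDiff.mp hvmem
          tauto
        · simp only [Finset.mem_symmDiff, Finset.mem_singleton, Finset.mem_erase]
          tauto
      rw [heq2, Finset.card_erase_of_mem hvmem]
      omega
    obtain ⟨p, hp⟩ := ih S' T hcard
    exact ⟨SimpleGraph.Walk.cons hadj p, by simpa using Nat.succ_le_succ hp⟩

lemma tar_walk_card_le {F : Finset (Finset V)} :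
    ∀ {S T : {S : Finset V // S ∈ F}} (p : (TARGraph F).Walk S T),
      (symmDiff S.1 T.1).card ≤ p.length := by
  intro S T p
  induction p with
  | nil => simp
  | @cons u v w h p ih =>
    have heq : symmDiff (symmDiff u.1 v.1) (symmDiff v.1 w.1) = symmDiff u.1 w.1 := by
      rw [symmDiff_assoc, symmDiff_symmDiff_cancel_left]
    have tri : (symmDiff u.1 w.1).card ≤ (symmDiff u.1 v.1).card + (symmDiff v.1 w.1).card := by
      rw [← heq]
      refine le_trans (Finset.card_le_card fun x hx => ?_) (Finset.card_union_le _ _)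
      rw [Finset.mem_symmDiff] at hx
      rw [Finset.mem_union]
      tauto
    have h1 : (symmDiff u.1 v.1).card = 1 := h
    simp only [SimpleGraph.Walk.length_cons]
    omega

lemma tar_iso_card {F : Finset (Finset V)} (hsup : SupersetClosed F)
    (e : TARGraph F ≃g TARGraph F) (S T : {S : Finset V // S ∈ F}) :
    (symmDiff (e S).1 (e T).1).card = (symmDiff S.1 T.1).card := by
  have key : ∀ (f : TARGraph F ≃g TARGraph F) (S T : {S : Finset V // S ∈ F}),
      (symmDiff (f S).1 (f T).1).card ≤ (symmDiff S.1 T.1).card := by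
    intro f S T
    obtain ⟨p, hp⟩ := tar_exists_walk hsup _ S T le_rfl
    have hw := tar_walk_card_le (p.map f.toHom)
    simpa using hw.trans (by simpa using hp)
  have h2 := key e.symm (e S) (e T)
  simp only [RelIso.symm_apply_apply] at h2
  exact le_antisymm (key e S T) h2

theorem stmt13 (F : Finset (Finset V)) (hne : F.Nonempty) (hsup : SupersetClosed F)
    (hn1 : ∀ S : Finset V, S.card = Fintype.card V - 1 → S ∈ F)
    (φ : {S : Finset V // S ∈ F} → {S : Finset V // S ∈ F}) :
    (∃ e : TARGraph F ≃g TARGraph F, ∀ S : {S : Finset V // S ∈ F}, e S = φ S) ↔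
    ∃ (R : Finset V) (ψ : V ≃ V),
      (∀ M : Finset V, IsMinimalMem F M → Disjoint R M) ∧
      (∀ M : Finset V, IsMinimalMem F M →
        IsMinimalMem F (M.image ψ) ∧ (M.image ψ).card = M.card) ∧
      ∀ S : {S : Finset V // S ∈ F}, (φ S).1 = symmDiff (S.1.image ψ) R := by
  constructor
  · rintro ⟨e, he⟩
    obtain ⟨S₀, hS₀⟩ := hne
    have hUF : (Finset.univ : Finset V) ∈ F := hsup hS₀ (Finset.subset_univ _)
    have hUv : ∀ v : V, (Finset.univ.erase v) ∈ F := fun v =>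
      hn1 _ (by rw [Finset.card_erase_of_mem (Finset.mem_univ v), Finset.card_univ])
    set U : {S : Finset V // S ∈ F} := ⟨Finset.univ, hUF⟩ with hUdef
    set W : Finset V := (e U).1 with hWdef
    have hdist := tar_iso_card hsup e
    have herase : ∀ v : V, (Finset.univ : Finset V).erase v = symmDiff Finset.univ {v} :=
      fun v => (symmDiff_singleton_of_mem (Finset.mem_univ v)).symm
    -- construct σ
    have hσex : ∀ v : V, ∃ w : V,
        (e ⟨Finset.univ.erase v, hUv v⟩).1 = symmDiff W {w} := by
      intro v
      have hadj : (TARGraph F).Adj ⟨Finset.univ.erase v, hUv v⟩ U := by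
        show (symmDiff ((Finset.univ : Finset V).erase v) Finset.univ).card = 1
        rw [herase v, symmDiff_comm, symmDiff_symmDiff_cancel_left]
        simp
      have hadj2 := e.map_adj_iff.mpr hadj
      have hcard1 : (symmDiff (e ⟨Finset.univ.erase v, hUv v⟩).1 W).card = 1 := hadj2
      obtain ⟨w, hw⟩ := Finset.card_eq_one.mp hcard1
      refine ⟨w, ?_⟩
      have := congrArg (fun A => symmDiff A W) hw
      simp only [symmDiff_symmDiff_cancel_right] at this
      rw [this, symmDiff_comm]
    choose σ hσ using hσex
    have hinj : Function.Injective σ := by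
      intro u v huv
      have h1 : e ⟨Finset.univ.erase u, hUv u⟩ = e ⟨Finset.univ.erase v, hUv v⟩ :=
        Subtype.ext (by rw [hσ u, hσ v, huv])
      have h2 : (Finset.univ : Finset V).erase u = Finset.univ.erase v :=
        congrArg Subtype.val (e.toEquiv.injective h1)
      by_contra hne2
      have : u ∈ (Finset.univ : Finset V).erase v :=
        Finset.mem_erase.mpr ⟨hne2, Finset.mem_univ u⟩
      rw [← h2] at this
      exact (Finset.mem_erase.mp this).1 rfl
    have hbij : Function.Bijective σ := Finite.injective_iff_bijective.mp hinj
    set ψ : V ≃ V := Equiv.ofBijective σ hbij with hψdef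
    have hψσ : ∀ x : V, ψ x = σ x := fun _ => rfl
    set R : Finset V := symmDiff W Finset.univ with hRdef
    -- the key formula
    have hform : ∀ (S : Finset V) (hS : S ∈ F), (e ⟨S, hS⟩).1 = symmDiff (S.image σ) R := by
      intro S hS
      set X : Finset V := (e ⟨S, hS⟩).1 with hXdef
      set ρ : Finset V := symmDiff X (symmDiff W Finset.univ) with hρdef
      have hXW : symmDiff ρ Finset.univ = symmDiff X W := by
        rw [hρdef, symmDiff_assoc, symmDiff_symmDiff_cancel_right]
      have e1 : symmDiff ρ Finset.univ = ρᶜ := by simp [← Finset.top_eq_univ]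
      have e2 : symmDiff S Finset.univ = Sᶜ := by simp [← Finset.top_eq_univ]
      have ha : (symmDiff X W).card = (symmDiff S Finset.univ).card := hdist ⟨S, hS⟩ U
      have hcards : ρ.card = S.card := by
        have h1 : ρᶜ.card = Sᶜ.card := by rw [← e1, ← e2, hXW]; exact ha
        rw [Finset.card_compl, Finset.card_compl] at h1
        have hρle := Finset.card_le_univ ρ
        have hSle := Finset.card_le_univ S
        omega
      have hccard : ρᶜ.card = Sᶜ.card := by
        rw [Finset.card_compl, Finset.card_compl, hcards]
      have hmemiff : ∀ v : V, σ v ∈ ρ ↔ v ∈ S := by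
        intro v
        have hb : (symmDiff X (symmDiff W {σ v})).card
            = (symmDiff S (Finset.univ.erase v)).card := by
          have hd := hdist ⟨S, hS⟩ ⟨Finset.univ.erase v, hUv v⟩
          rw [hσ v] at hd
          exact hd
        have hL : symmDiff X (symmDiff W {σ v}) = symmDiff ρᶜ {σ v} := by
          rw [← symmDiff_assoc, ← hXW, e1]
        have hR2 : symmDiff S (Finset.univ.erase v) = symmDiff Sᶜ {v} := by
          rw [herase v, ← symmDiff_assoc, e2]
        rw [hL, hR2] at hb
        constructor
        · intro hσv
          by_contra hv
          rw [symmDiff_singleton_of_not_mem (by simpa using hσv),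
            symmDiff_singleton_of_mem (by simpa using hv)] at hb
          rw [Finset.card_insert_of_notMem (by simpa using hσv),
            Finset.card_erase_of_mem (by simpa using hv)] at hb
          have hpos : 1 ≤ Sᶜ.card := Finset.card_pos.mpr ⟨v, by simpa using hv⟩
          omega
        · intro hv
          by_contra hσv
          rw [symmDiff_singleton_of_mem (by simpa using hσv),
            symmDiff_singleton_of_not_mem (by simpa using hv)] at hb
          rw [Finset.card_erase_of_mem (by simpa using hσv),
            Finset.card_insert_of_notMem (by simpa using hv)] at hb
          have hpos : 1 ≤ ρᶜ.card := Finset.card_pos.mpr ⟨σ v, by simpa using hσv⟩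
          omega
      have himg : S.image σ ⊆ ρ := by
        intro x hx
        obtain ⟨v, hv, rfl⟩ := Finset.mem_image.mp hx
        exact (hmemiff v).mpr hv
      have hρeq : S.image σ = ρ :=
        Finset.eq_of_subset_of_card_le himg
          (by rw [hcards, Finset.card_image_of_injective _ hinj])
      show X = symmDiff (S.image σ) R
      rw [hρeq, hρdef, ← hRdef, symmDiff_symmDiff_cancel_right]
    -- g-preservation
    have hg : ∀ S : Finset V, S ∈ F ↔ symmDiff (S.image σ) R ∈ F := by
      intro S
      constructor
      · intro hS
        rw [← hform S hS]
        exact (e ⟨S, hS⟩).2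
      · intro hT
        obtain ⟨S', hS'⟩ := e.toEquiv.surjective ⟨_, hT⟩
        have hv : symmDiff (S'.1.image σ) R = symmDiff (S.image σ) R := by
          rw [← hform S'.1 S'.2]
          exact congrArg Subtype.val hS'
        have himg : S'.1.image σ = S.image σ := by
          have h2 := congrArg (fun A => symmDiff A R) hv
          simpa only [symmDiff_symmDiff_cancel_right] using h2
        have : S'.1 = S := Finset.image_injective hinj himg
        rw [← this]; exact S'.2
    have himgc : ∀ A : Finset V, (A.image ψ.symm).image σ = A := by
      intro A
      rw [Finset.image_image]
      ext x
      simp only [Finset.mem_image, Function.comp]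
      constructor
      · rintro ⟨y, hy, rfl⟩
        have : σ (ψ.symm y) = y := by rw [← hψσ, Equiv.apply_symm_apply]
        rwa [this]
      · intro hx
        exact ⟨x, hx, by rw [← hψσ, Equiv.apply_symm_apply]⟩
    have hunion_symm : ∀ A B : Finset V, symmDiff (A ∪ B) B = A \ B := by
      intro A B; ext x
      simp only [Finset.mem_symmDiff, Finset.mem_union, Finset.mem_sdiff]
      tauto
    have hsdiff_symm : ∀ A B : Finset V, symmDiff (A \ B) B = A ∪ B := by
      intro A B; ext x
      simp only [Finset.mem_symmDiff, Finset.mem_union, Finset.mem_sdiff]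
      tauto
    have h1 : ∀ S : Finset V, S ∈ F → (S.image σ) \ R ∈ F := by
      intro S hS
      have hu : S ∪ R.image ψ.symm ∈ F := hsup hS Finset.subset_union_left
      have hh := (hg _).mp hu
      rwa [Finset.image_union, himgc, hunion_symm] at hh
    have h2 : ∀ T : Finset V, T ∈ F → (T \ R).image ψ.symm ∈ F := by
      intro T hT
      have hu : T ∪ R ∈ F := hsup hT Finset.subset_union_left
      refine (hg _).mpr ?_
      rwa [himgc, hsdiff_symm]
    have h3 : ∀ T : Finset V, T ∈ F → T \ R ∈ F := by
      intro T hT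
      have hh := h1 _ (h2 T hT)
      rwa [himgc, sdiff_idem] at hh
    have hdisj : ∀ M : Finset V, IsMinimalMem F M → Disjoint R M := by
      intro M hM
      have hMR := h3 M hM.1
      by_contra hd
      have hss : M \ R ⊂ M := by
        refine Finset.ssubset_iff_subset_ne.mpr ⟨Finset.sdiff_subset, ?_⟩
        intro hc
        exact hd (Finset.sdiff_eq_self_iff_disjoint.mp hc).symm
      exact hM.2 _ hss hMR
    refine ⟨R, ψ, hdisj, ?_, ?_⟩
    · intro M hM
      have hcard : (M.image ψ).card = M.card := Finset.card_image_of_injective _ ψ.injective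
      refine ⟨⟨?_, ?_⟩, hcard⟩
      · exact hsup (h1 M hM.1) Finset.sdiff_subset
      · intro M' hss hM'
        have h2' := h2 M' hM'
        have hsub : (M' \ R).image ψ.symm ⊆ M'.image ψ.symm :=
          Finset.image_subset_image Finset.sdiff_subset
        have hsub2 : M'.image ψ.symm ⊆ M := by
          intro x hx
          obtain ⟨y, hy, rfl⟩ := Finset.mem_image.mp hx
          have hyM : y ∈ M.image ψ := hss.subset hy
          obtain ⟨z, hz, rfl⟩ := Finset.mem_image.mp hyM
          simpa [Equiv.symm_apply_apply] using hz
        have hlt : (M'.image ψ.symm).card < M.card := by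
          rw [Finset.card_image_of_injective _ ψ.symm.injective, ← hcard]
          exact Finset.card_lt_card hss
        have hfin : (M' \ R).image ψ.symm ⊂ M := by
          refine Finset.ssubset_iff_subset_ne.mpr ⟨hsub.trans hsub2, ?_⟩
          intro heq
          have hc := lt_of_le_of_lt (Finset.card_le_card hsub) hlt
          rw [heq] at hc
          exact lt_irrefl _ hc
        exact hM.2 _ hfin h2'
    · intro S
      rw [← he S]
      exact hform S.1 S.2
  · rintro ⟨R, ψ, hdisj, hmin, hφ⟩
    have hsurj : ∀ N : Finset V, IsMinimalMem F N →
        ∃ M : Finset V, IsMinimalMem F M ∧ M.image ψ = N := by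
      have hfin : Function.Surjective (fun M : {M : Finset V // IsMinimalMem F M} =>
          (⟨M.1.image ψ, (hmin _ M.2).1⟩ : {M : Finset V // IsMinimalMem F M})) := by
        apply Finite.injective_iff_surjective.mp
        intro a b hab
        exact Subtype.ext (Finset.image_injective ψ.injective (congrArg Subtype.val hab))
      intro N hN
      obtain ⟨M, hM⟩ := hfin ⟨N, hN⟩
      exact ⟨M.1, M.2, congrArg Subtype.val hM⟩
    have hfwd : ∀ S : Finset V, S ∈ F → symmDiff (S.image ψ) R ∈ F := by
      intro S hS
      obtain ⟨M, hM, hMS⟩ := tar_exists_minimal_subset hS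
      refine hsup (hmin M hM).1.1 ?_
      intro x hx
      obtain ⟨y, hy, rfl⟩ := Finset.mem_image.mp hx
      have hxS : ψ y ∈ S.image ψ := Finset.mem_image_of_mem _ (hMS hy)
      have hxR : ψ y ∉ R :=
        Finset.disjoint_right.mp (hdisj _ (hmin M hM).1) hx
      exact Finset.mem_symmDiff.mpr (Or.inl ⟨hxS, hxR⟩)
    have hbwd : ∀ T : Finset V, T ∈ F → (symmDiff T R).image ψ.symm ∈ F := by
      intro T hT
      obtain ⟨M, hM, hMT⟩ := tar_exists_minimal_subset hT
      obtain ⟨M₀, hM₀, hM₀ψ⟩ := hsurj M hM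
      refine hsup hM₀.1 ?_
      intro x hx
      refine Finset.mem_image.mpr ⟨ψ x, ?_, Equiv.symm_apply_apply ψ x⟩
      have hx1 : ψ x ∈ M := hM₀ψ ▸ Finset.mem_image_of_mem _ hx
      exact Finset.mem_symmDiff.mpr
        (Or.inl ⟨hMT hx1, Finset.disjoint_right.mp (hdisj M hM) hx1⟩)
    have hcancel : ∀ A : Finset V, (A.image ψ).image ψ.symm = A := by
      intro A; rw [Finset.image_image, Equiv.symm_comp_self, Finset.image_id]
    have hcancel2 : ∀ A : Finset V, (A.image ψ.symm).image ψ = A := by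
      intro A; rw [Finset.image_image, Equiv.self_comp_symm, Finset.image_id]
    refine ⟨⟨⟨φ, fun T => ⟨(symmDiff T.1 R).image ψ.symm, hbwd _ T.2⟩, ?_, ?_⟩, ?_⟩,
      fun S => rfl⟩
    · intro S
      apply Subtype.ext
      show (symmDiff (φ S).1 R).image ψ.symm = S.1
      rw [hφ S, symmDiff_symmDiff_cancel_right, hcancel]
    · intro T
      apply Subtype.ext
      show (φ ⟨(symmDiff T.1 R).image ψ.symm, hbwd _ T.2⟩).1 = T.1
      rw [hφ ⟨(symmDiff T.1 R).image ψ.symm, hbwd _ T.2⟩]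
      show symmDiff (((symmDiff T.1 R).image ψ.symm).image ψ) R = T.1
      rw [hcancel2, symmDiff_symmDiff_cancel_right]
    · intro S T
      show (symmDiff (φ S).1 (φ T).1).card = 1 ↔ (symmDiff S.1 T.1).card = 1
      rw [hφ S, hφ T]
      have hkey : symmDiff (symmDiff (S.1.image ψ) R) (symmDiff (T.1.image ψ) R)
          = symmDiff (S.1.image ψ) (T.1.image ψ) := by
        rw [symmDiff_symmDiff_symmDiff_comm]
        simp
      rw [hkey, ← Finset.image_symmDiff _ _ ψ.injective,
        Finset.card_image_of_injective _ ψ.injective]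
end

section
/- Let V be a finite type with n = |V| and let F be a nonempty superset-closed family of finsets of V. Let X(F) be the minimum cardinality of a member of F and X̄(F) the maximum cardinality of a minimal member of F. If F has at least two distinct minimal members, then the X̄(F)-TAR graph of F is disconnected, and for every natural number k with k ≥ min(X(F) + X̄(F), n) the k-TAR graph of F is connected. -/
variable {V : Type*} [Fintype V] [DecidableEq V]

/-- The `k`-TAR graph: the subgraph of the TAR graph induced on members of
cardinality at most `k`. -/
def kTARGraph (F : Finset (Finset V)) (k : ℕ) :
    SimpleGraph {S : Finset V // S ∈ F ∧ S.card ≤ k} where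
  Adj S T := (symmDiff S.1 T.1).card = 1
  symm := ⟨fun S T h => by rwa [symmDiff_comm] at h⟩
  loopless := ⟨fun S h => by simp [symmDiff_self] at h⟩

lemma symmDiff_erase_card {S : Finset V} {v : V} (hv : v ∈ S) :
    (symmDiff S (S.erase v)).card = 1 := by
  have h : symmDiff S (S.erase v) = {v} := by
    ext a
    simp only [Finset.mem_symmDiff, Finset.mem_erase, Finset.mem_singleton]
    constructor
    · rintro (⟨ha, h⟩ | ⟨⟨hne, ha⟩, h⟩)
      · by_contra hav; exact h ⟨hav, ha⟩
      · exact absurd ha h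
    · rintro rfl; exact Or.inl ⟨hv, fun h => h.1 rfl⟩
  rw [h]; exact Finset.card_singleton v

lemma reach_down_aux (F : Finset (Finset V)) (hsup : SupersetClosed F) (k : ℕ) :
    ∀ n (S M : Finset V), S.card ≤ n → ∀ (hSF : S ∈ F) (hMF : M ∈ F)
      (_ : M ⊆ S) (hSk : S.card ≤ k) (hMk : M.card ≤ k),
    (kTARGraph F k).Reachable ⟨S, hSF, hSk⟩ ⟨M, hMF, hMk⟩ := by
  intro n
  induction n with
  | zero =>
    intro S M hS0 hSF hMF hMS hSk hMk
    have hS : S = ∅ := Finset.card_eq_zero.mp (Nat.le_zero.mp hS0)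
    subst hS
    have hM : M = ∅ := Finset.subset_empty.mp hMS
    subst hM
    exact SimpleGraph.Reachable.refl _
  | succ n ih =>
    intro S M hSn hSF hMF hMS hSk hMk
    by_cases hSM : S = M
    · subst hSM; exact SimpleGraph.Reachable.refl _
    · have hne : (S \ M).Nonempty := by
        rw [Finset.sdiff_nonempty]
        intro hsub
        exact hSM (Finset.Subset.antisymm hsub hMS)
      obtain ⟨v, hv⟩ := hne
      rw [Finset.mem_sdiff] at hv
      obtain ⟨hvS, hvM⟩ := hv
      have hMS' : M ⊆ S.erase v := Finset.subset_erase.mpr ⟨hMS, hvM⟩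
      have hpos : 0 < S.card := Finset.card_pos.mpr ⟨v, hvS⟩
      have hec := Finset.card_erase_of_mem hvS
      have hcard : (S.erase v).card ≤ n := by omega
      have hS'k : (S.erase v).card ≤ k := by omega
      have hS'F : S.erase v ∈ F := hsup hMF hMS'
      have hadj : (kTARGraph F k).Adj ⟨S, hSF, hSk⟩ ⟨S.erase v, hS'F, hS'k⟩ :=
        symmDiff_erase_card hvS
      exact hadj.reachable.trans (ih (S.erase v) M hcard hS'F hMF hMS' hS'k hMk)

/-- Every member of the family contains a minimal member. -/
lemma exists_minimal_subset (F : Finset (Finset V)) :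
    ∀ n (S : Finset V), S.card ≤ n → S ∈ F → ∃ M, M ⊆ S ∧ IsMinimalMem F M := by
  intro n
  induction n with
  | zero =>
    intro S hS0 hSF
    have hS : S = ∅ := Finset.card_eq_zero.mp (Nat.le_zero.mp hS0)
    subst hS
    exact ⟨∅, Finset.Subset.refl _, hSF, fun M' hM' => absurd hM' (Finset.not_ssubset_empty _)⟩
  | succ n ih =>
    intro S hSn hSF
    by_cases hmin : ∀ S' : Finset V, S' ⊂ S → S' ∉ F
    · exact ⟨S, Finset.Subset.refl _, hSF, hmin⟩
    · push_neg at hmin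
      obtain ⟨S', hS'S, hS'F⟩ := hmin
      have hcard : S'.card ≤ n := by
        have := Finset.card_lt_card hS'S
        omega
      obtain ⟨M, hMS', hMmin⟩ := ih S' hcard hS'F
      exact ⟨M, hMS'.trans hS'S.subset, hMmin⟩

theorem stmt14 (F : Finset (Finset V)) (hne : F.Nonempty) (hsup : SupersetClosed F)
    (x xbar : ℕ)
    (hx : IsLeast {k : ℕ | ∃ S ∈ F, S.card = k} x)
    (hxbar : IsGreatest {k : ℕ | ∃ M : Finset V, IsMinimalMem F M ∧ M.card = k} xbar)
    (htwo : ∃ M1 M2 : Finset V, IsMinimalMem F M1 ∧ IsMinimalMem F M2 ∧ M1 ≠ M2) :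
    ¬ (kTARGraph F xbar).Connected ∧
    ∀ k : ℕ, min (x + xbar) (Fintype.card V) ≤ k → (kTARGraph F k).Connected := by
  -- Extract a minimal member M of maximum cardinality xbar.
  obtain ⟨⟨M, hMmin, hMcard⟩, hub⟩ := hxbar
  -- Extract a member A of minimum cardinality x.
  obtain ⟨⟨A, hAF, hAcard⟩, hlb⟩ := hx
  have hAmin : IsMinimalMem F A := by
    refine ⟨hAF, fun M' hM' hM'F => ?_⟩
    have h1 : x ≤ M'.card := hlb ⟨M', hM'F, rfl⟩
    have h2 : M'.card < A.card := Finset.card_lt_card hM'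
    omega
  constructor
  · -- Disconnectedness of the xbar-TAR graph
    intro hcon
    -- Another minimal member different from M
    obtain ⟨M1, M2, h1, h2, hne12⟩ := htwo
    have hM' : ∃ M', IsMinimalMem F M' ∧ M' ≠ M := by
      by_cases hM1 : M1 = M
      · exact ⟨M2, h2, fun h => hne12 (hM1.trans h.symm)⟩
      · exact ⟨M1, h1, hM1⟩
    obtain ⟨M', hM'min, hM'ne⟩ := hM'
    have hM'card : M'.card ≤ xbar := hub ⟨M', hM'min, rfl⟩
    set vM : {S : Finset V // S ∈ F ∧ S.card ≤ xbar} := ⟨M, hMmin.1, le_of_eq hMcard⟩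
    set vM' : {S : Finset V // S ∈ F ∧ S.card ≤ xbar} := ⟨M', hM'min.1, hM'card⟩
    obtain ⟨w⟩ := hcon.preconnected vM vM'
    have hwnil : ¬ w.Nil := by
      intro hnil
      have := SimpleGraph.Walk.Nil.eq hnil
      apply hM'ne
      simpa [vM, vM', Subtype.ext_iff] using this.symm
    have hadj := SimpleGraph.Walk.adj_snd hwnil
    set T := w.getVert 1
    have hadj' : (symmDiff M T.1).card = 1 := hadj
    obtain ⟨v, hsd⟩ := Finset.card_eq_one.mp hadj'
    by_cases hvM : v ∈ M
    · -- T = M \ {v}, contradicting minimality of M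
      have hvT : v ∉ T.1 := by
        have : v ∈ symmDiff M T.1 := hsd ▸ Finset.mem_singleton_self v
        rw [Finset.mem_symmDiff] at this
        rcases this with ⟨_, h⟩ | ⟨_, h⟩
        · exact h
        · exact absurd hvM h
      have hTM : T.1 ⊆ M := by
        intro a haT
        by_contra haM
        have : a ∈ symmDiff M T.1 := Finset.mem_symmDiff.mpr (Or.inr ⟨haT, haM⟩)
        rw [hsd, Finset.mem_singleton] at this
        subst this
        exact hvT haT
      have hss : T.1 ⊂ M := ⟨hTM, fun h => hvT (h hvM)⟩
      exact hMmin.2 T.1 hss T.2.1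
    · -- T = M ∪ {v}, contradicting card bound
      have hvT : v ∈ T.1 := by
        have : v ∈ symmDiff M T.1 := hsd ▸ Finset.mem_singleton_self v
        rw [Finset.mem_symmDiff] at this
        rcases this with ⟨h, _⟩ | ⟨h, _⟩
        · exact absurd h hvM
        · exact h
      have hMT : M ⊆ T.1 := by
        intro a haM
        by_contra haT
        have : a ∈ symmDiff M T.1 := Finset.mem_symmDiff.mpr (Or.inl ⟨haM, haT⟩)
        rw [hsd, Finset.mem_singleton] at this
        subst this
        exact hvM haM
      have hins : insert v M ⊆ T.1 := Finset.insert_subset hvT hMT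
      have hc1 : (insert v M).card = xbar + 1 := by
        rw [Finset.card_insert_of_notMem hvM, hMcard]
      have hc2 : (insert v M).card ≤ T.1.card := Finset.card_le_card hins
      have hc3 : T.1.card ≤ xbar := T.2.2
      omega
  · -- Connectedness for large k
    intro k hk
    have hAn : A.card ≤ Fintype.card V := by
      have := Finset.card_le_card (Finset.subset_univ A)
      simpa using this
    have hxk : x ≤ k := by
      rcases min_le_iff.mp hk with h | h
      · omega
      · omega
    have hAk : A.card ≤ k := by omega
    rw [SimpleGraph.connected_iff]
    refine ⟨?_, ⟨⟨A, hAF, hAk⟩⟩⟩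
    have key : ∀ u : {S : Finset V // S ∈ F ∧ S.card ≤ k},
        (kTARGraph F k).Reachable u ⟨A, hAF, hAk⟩ := by
      rintro ⟨S, hSF, hSk⟩
      obtain ⟨N, hNS, hNmin⟩ := exists_minimal_subset F S.card S le_rfl hSF
      have hNcard : N.card ≤ xbar := hub ⟨N, hNmin, rfl⟩
      have hNk : N.card ≤ k := le_trans (Finset.card_le_card hNS) hSk
      -- S reaches N
      have r1 := reach_down_aux F hsup k S.card S N le_rfl hSF hNmin.1 hNS hSk hNk
      -- card of N ∪ A is at most k
      have hUk : (N ∪ A).card ≤ k := by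
        rcases min_le_iff.mp hk with h | h
        · have := Finset.card_union_le N A
          omega
        · have hUn : (N ∪ A).card ≤ Fintype.card V := by
            have := Finset.card_le_card (Finset.subset_univ (N ∪ A))
            simpa using this
          omega
      have hUF : N ∪ A ∈ F := hsup hNmin.1 Finset.subset_union_left
      -- N ∪ A reaches N
      have r2 := reach_down_aux F hsup k (N ∪ A).card (N ∪ A) N le_rfl hUF hNmin.1
        Finset.subset_union_left hUk hNk
      -- N ∪ A reaches A
      have r3 := reach_down_aux F hsup k (N ∪ A).card (N ∪ A) A le_rfl hUF hAF
        Finset.subset_union_right hUk hAk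
      exact r1.trans (r2.symm.trans r3)
    exact fun u v => (key u).trans (key v).symm
end
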